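/- Let Ω ⊆ ℝⁿ be a convex set containing 0, let U ⊆ ℝⁿ be an open set containing Ω, and let f : U → ℝⁿ be twice continuously differentiable with f(0) = 0. Let L₂ > 0 satisfy ‖D²f(x)‖ ≤ L₂ for all x ∈ Ω. Let P be a symmetric real n×n matrix with (1/2)(P·Df(0) + Df(0)ᵀ·P) ⪯ −I, and let ε ∈ (0,1) and β > 0 satisfy β ≤ (1 − ε)/(L₂‖P‖). Then for every x ∈ Ω with ‖x‖ < β one has xᵀ P f(x) ≤ −ε‖x‖². -/

import Mathlib

open Matrix

/-- The ℓ² operator norm of a real matrix, i.e. the norm of the induced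
continuous linear map on Euclidean space. -/
noncomputable def opNorm {n : ℕ} (P : Matrix (Fin n) (Fin n) ℝ) : ℝ :=
  ‖Matrix.toEuclideanCLM (𝕜 := ℝ) P‖

/-- The bilinear pairing `xᵀ P w` on Euclidean space. -/
noncomputable def quadF {n : ℕ} (P : Matrix (Fin n) (Fin n) ℝ)
    (x w : EuclideanSpace ℝ (Fin n)) : ℝ :=
  inner ℝ x (Matrix.toEuclideanLin P w)

/-- The Jacobian matrix `Df(0)` of `f` at the origin:
`(Df(0))_{ij} = ∂f_i/∂x_j (0)`. -/
noncomputable def jacobianAtZero {n : ℕ}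
    (f : EuclideanSpace ℝ (Fin n) → EuclideanSpace ℝ (Fin n)) :
    Matrix (Fin n) (Fin n) ℝ :=
  Matrix.of (fun i j => fderiv ℝ f 0 (EuclideanSpace.single j 1) i)

lemma aux_norm_fderiv_le {𝕜 : Type*} [NontriviallyNormedField 𝕜] {E F : Type*}
    [NormedAddCommGroup E] [NormedSpace 𝕜 E] [NormedAddCommGroup F] [NormedSpace 𝕜 F]
    (g : E → F) (x : E) :
    ‖fderiv 𝕜 g x‖ ≤ ‖iteratedFDeriv 𝕜 1 g x‖ := by
  refine ContinuousLinearMap.opNorm_le_bound _ (norm_nonneg _) fun h => ?_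
  have := (iteratedFDeriv 𝕜 1 g x).le_opNorm (fun _ => h)
  simpa [iteratedFDeriv_one_apply] using this

lemma aux_quad_eq {n : ℕ} (P : Matrix (Fin n) (Fin n) ℝ) (x w : EuclideanSpace ℝ (Fin n)) :
    quadF P x w = (WithLp.equiv 2 _ x) ⬝ᵥ P *ᵥ (WithLp.equiv 2 _ w) := by
  simp [quadF, PiLp.inner_apply, Matrix.toEuclideanLin_apply, dotProduct, mul_comm]

lemma aux_self_dot {n : ℕ} (x : EuclideanSpace ℝ (Fin n)) :
    (WithLp.equiv 2 _ x) ⬝ᵥ (WithLp.equiv 2 _ x) = ‖x‖ ^ 2 := by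
  rw [← real_inner_self_eq_norm_sq]
  rw [PiLp.inner_apply]; simp [dotProduct, sq]

lemma aux_mulVec_eq {n : ℕ} (A : EuclideanSpace ℝ (Fin n) →L[ℝ] EuclideanSpace ℝ (Fin n))
    (x : EuclideanSpace ℝ (Fin n)) :
    (Matrix.of fun i j => A (EuclideanSpace.single j 1) i) *ᵥ (WithLp.equiv 2 _ x)
      = WithLp.equiv 2 _ (A x) := by
  have hx : x = ∑ j, x j • EuclideanSpace.single j (1:ℝ) := by
    have := (EuclideanSpace.basisFun (Fin n) ℝ).sum_repr x
    simpa [EuclideanSpace.basisFun_apply] using this.symm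
  funext i
  conv_rhs => rw [hx]
  have : (∑ j, x j • A (EuclideanSpace.single j (1:ℝ))) i
      = ∑ j, x j * A (EuclideanSpace.single j (1:ℝ)) i := by
    induction (Finset.univ : Finset (Fin n)) using Finset.induction with
    | empty => simp
    | insert a s h ih => rw [Finset.sum_insert h, Finset.sum_insert h, ← ih]; rfl
  simp [mulVec, dotProduct, map_sum, this, mul_comm]

/-- near-origin case of the grid-sufficiency theorem.
Let `Ω ⊆ ℝⁿ` be convex with `0 ∈ Ω`, `U ⊇ Ω` open, and `f : U → ℝⁿ` be `C²`
with `f 0 = 0`. Let `L₂ > 0` bound `‖D²f‖` on `Ω`, let `P` be symmetric with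
`(1/2)(P·Df(0) + Df(0)ᵀ·P) ⪯ -I`, and let `ε ∈ (0,1)`, `β > 0` satisfy
`β ≤ (1-ε)/(L₂ ‖P‖)`. Then every `x ∈ Ω` with `‖x‖ < β` satisfies
`xᵀ P f(x) ≤ -ε ‖x‖²`. -/
theorem near_origin_case {n : ℕ}
    (Ω U : Set (EuclideanSpace ℝ (Fin n)))
    (hconv : Convex ℝ Ω) (h0 : (0 : EuclideanSpace ℝ (Fin n)) ∈ Ω)
    (hU : IsOpen U) (hΩU : Ω ⊆ U)
    (f : EuclideanSpace ℝ (Fin n) → EuclideanSpace ℝ (Fin n))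
    (hf : ContDiffOn ℝ 2 f U) (hf0 : f 0 = 0)
    (L₂ : ℝ) (hL₂ : 0 < L₂)
    (hD2 : ∀ x ∈ Ω, ‖iteratedFDeriv ℝ 2 f x‖ ≤ L₂)
    (P : Matrix (Fin n) (Fin n) ℝ) (hP : P.IsSymm)
    (hLMI : (-(1 : Matrix (Fin n) (Fin n) ℝ)
      - (1 / 2 : ℝ) • (P * jacobianAtZero f + (jacobianAtZero f)ᵀ * P)).PosSemidef)
    (ε β : ℝ) (hε0 : 0 < ε) (hε1 : ε < 1) (hβ0 : 0 < β)
    (hβ : β ≤ (1 - ε) / (L₂ * opNorm P)) :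
    ∀ x ∈ Ω, ‖x‖ < β → quadF P x (f x) ≤ -ε * ‖x‖ ^ 2 := by
  -- positivity of the denominator
  have hopP : 0 ≤ opNorm P := norm_nonneg _
  have hden : 0 < L₂ * opNorm P := by
    rcases lt_or_eq_of_le (mul_nonneg hL₂.le hopP) with h | h
    · exact h
    · exfalso
      rw [← h, div_zero] at hβ
      linarith
  have hkey : β * (L₂ * opNorm P) ≤ 1 - ε := by
    rw [le_div_iff₀ hden] at hβ; linarith [hβ]
  -- differentiability facts
  have hCAt : ∀ y ∈ U, ContDiffAt ℝ 2 f y := fun y hy => hf.contDiffAt (hU.mem_nhds hy)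
  have hdf : ∀ y ∈ U, DifferentiableAt ℝ f y := fun y hy =>
    (hCAt y hy).differentiableAt (by norm_num)
  have hdF : ∀ y ∈ U, DifferentiableAt ℝ (fderiv ℝ f) y := fun y hy =>
    (((hCAt y hy).fderiv_right (m := 1) (by norm_num)).differentiableAt (by norm_num))
  -- bound on second derivative
  have hbound : ∀ y ∈ Ω, ‖fderiv ℝ (fderiv ℝ f) y‖ ≤ L₂ := fun y hy => by
    refine (aux_norm_fderiv_le _ _).trans ?_
    rw [norm_iteratedFDeriv_fderiv]
    exact hD2 y hy
  -- Lipschitz-type bound on `fderiv f` on Ω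
  set A := fderiv ℝ f 0 with hA
  have hstep : ∀ y ∈ Ω, ‖fderiv ℝ f y - A‖ ≤ L₂ * ‖y‖ := fun y hy => by
    have h := hconv.norm_image_sub_le_of_norm_fderiv_le
      (fun z hz => hdF z (hΩU hz)) (fun z hz => hbound z hz) h0 hy
    simp only [sub_zero] at h
    exact h
  intro x hx hxβ
  -- Taylor estimate on the segment from 0 to x
  have hsub : segment ℝ 0 x ⊆ Ω := hconv.segment_subset h0 hx
  have hseg_norm : ∀ y ∈ segment ℝ 0 x, ‖y‖ ≤ ‖x‖ := by
    rintro y ⟨a, b, ha, hb, hab, rfl⟩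
    have : ‖a • (0 : EuclideanSpace ℝ (Fin n)) + b • x‖ = b * ‖x‖ := by
      simp [norm_smul, abs_of_nonneg hb]
    rw [this]
    nlinarith [norm_nonneg x]
  have hbnd : ∀ y ∈ segment ℝ 0 x, ‖fderiv ℝ f y - A‖ ≤ L₂ * ‖x‖ := fun y hy =>
    (hstep y (hsub hy)).trans (mul_le_mul_of_nonneg_left (hseg_norm y hy) hL₂.le)
  have htay : ‖f x - A x‖ ≤ L₂ * ‖x‖ * ‖x‖ := by
    have h := Convex.norm_image_sub_le_of_norm_fderiv_le'
      (fun y hy => hdf y (hΩU (hsub hy))) hbnd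
      (convex_segment (0 : EuclideanSpace ℝ (Fin n)) x)
      (left_mem_segment ℝ 0 x) (right_mem_segment ℝ 0 x)
    simp only [hf0, sub_zero, map_sub] at h ⊢
    simpa using h
  -- matrix/quadratic form computations
  set J := jacobianAtZero f with hJ
  set x' : Fin n → ℝ := WithLp.equiv 2 _ x with hx'
  have hJA : J *ᵥ x' = WithLp.equiv 2 _ (A x) := aux_mulVec_eq A x
  have hPsymm : Pᵀ = P := hP
  have e2 : x' ⬝ᵥ (Jᵀ * P) *ᵥ x' = x' ⬝ᵥ P *ᵥ (J *ᵥ x') := by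
    rw [← mulVec_mulVec, dotProduct_mulVec x' Jᵀ, vecMul_transpose,
      dotProduct_mulVec x' P, ← hPsymm, vecMul_transpose, hPsymm, dotProduct_comm]
  have hpsd := hLMI.dotProduct_mulVec_nonneg x'
  rw [star_trivial] at hpsd
  have hexp : x' ⬝ᵥ (-(1 : Matrix (Fin n) (Fin n) ℝ)
      - (1 / 2 : ℝ) • (P * J + Jᵀ * P)) *ᵥ x'
      = -(‖x‖ ^ 2) - (x' ⬝ᵥ P *ᵥ (J *ᵥ x')) := by
    rw [sub_mulVec, dotProduct_sub, neg_mulVec, one_mulVec, dotProduct_neg,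
      aux_self_dot, smul_mulVec, dotProduct_smul, add_mulVec,
      dotProduct_add, e2, ← mulVec_mulVec]
    simp only [smul_eq_mul]
    ring
  rw [hexp] at hpsd
  have hq : quadF P x (A x) ≤ -(‖x‖ ^ 2) := by
    rw [aux_quad_eq, ← hJA]
    linarith
  -- Cauchy–Schwarz bound on the remainder
  have hcs : quadF P x (f x - A x) ≤ opNorm P * ‖x‖ * ‖f x - A x‖ := by
    have h1 : quadF P x (f x - A x) ≤ ‖x‖ * ‖Matrix.toEuclideanLin P (f x - A x)‖ :=
      real_inner_le_norm _ _
    have h2 : Matrix.toEuclideanLin P (f x - A x)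
        = Matrix.toEuclideanCLM (𝕜 := ℝ) P (f x - A x) := by
      rw [← Matrix.coe_toEuclideanCLM_eq_toEuclideanLin]; rfl
    have h3 : ‖Matrix.toEuclideanCLM (𝕜 := ℝ) P (f x - A x)‖ ≤ opNorm P * ‖f x - A x‖ :=
      (Matrix.toEuclideanCLM (𝕜 := ℝ) P).le_opNorm _
    calc quadF P x (f x - A x) ≤ ‖x‖ * ‖Matrix.toEuclideanLin P (f x - A x)‖ := h1
      _ ≤ ‖x‖ * (opNorm P * ‖f x - A x‖) := by
          rw [h2]; exact mul_le_mul_of_nonneg_left h3 (norm_nonneg _)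
      _ = opNorm P * ‖x‖ * ‖f x - A x‖ := by ring
  have hsplit : quadF P x (f x) = quadF P x (A x) + quadF P x (f x - A x) := by
    simp only [quadF, map_sub, inner_sub_right]
    ring
  have hxβ' : ‖x‖ ≤ β := hxβ.le
  have hnx : 0 ≤ ‖x‖ := norm_nonneg x
  have hrem : quadF P x (f x - A x) ≤ (1 - ε) * ‖x‖ ^ 2 := by
    have h4 : quadF P x (f x - A x) ≤ opNorm P * ‖x‖ * (L₂ * ‖x‖ * ‖x‖) :=
      hcs.trans (mul_le_mul_of_nonneg_left htay (mul_nonneg hopP hnx))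
    have h5 : ‖x‖ * (L₂ * opNorm P) ≤ 1 - ε :=
      le_trans (mul_le_mul_of_nonneg_right hxβ' hden.le) hkey
    nlinarith [h4, mul_le_mul_of_nonneg_right h5 (sq_nonneg ‖x‖), sq_nonneg ‖x‖]
  rw [hsplit]
  nlinarith [hq, hrem]
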